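/- In the lower-bound graph G (λ disjoint complete binary trees of height k rooted at r_1,…,r_λ, source s with edges to each root, and complete bipartite edges from the set X of all leaves to a set Y), for every leaf x of tree B_i and every y ∈ Y the following holds: letting P be the unique root-to-x path in B_i and F the set of edges (u,v) of B_i with u on P and v the child of u not on P, the graph G∖F contains exactly one path from s to y passing through r_i, and this path uses the edge (x,y); moreover maxflow(s,y,G∖F) = λ. Consequently any subgraph of G missing the edge (x,y) fails to preserve the s-to-y max-flow under failure of F and is not a (λ,k)-FT-BFP. -/

import Mathlib

open Finset

/-- `p` is a nonempty directed path/walk (as a list of edges) from `s` to `t`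
using only edges of `G`. -/
def IsPath {V : Type*} (G : Finset (V × V)) (s t : V) (p : List (V × V)) : Prop :=
  p ≠ [] ∧ (∀ e ∈ p, e ∈ G) ∧ List.Chain' (fun e f => e.2 = f.1) p ∧
    p.head?.map Prod.fst = some s ∧ p.getLast?.map Prod.snd = some t

/-- `G` contains `r` pairwise edge-disjoint paths from `s` to `t` (unit capacities). -/
def EDP {V : Type*} (G : Finset (V × V)) (s t : V) (r : ℕ) : Prop :=
  ∃ ps : Fin r → List (V × V), (∀ i, IsPath G s t (ps i)) ∧
    ∀ i j, i ≠ j → ∀ e, e ∈ ps i → e ∉ ps j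

/-- Max-flow with unit capacities: the maximum number of edge-disjoint `s`-`t` paths. -/
noncomputable def maxFlow {V : Type*} (G : Finset (V × V)) (s t : V) : ℕ :=
  sSup {r | EDP G s t r}

/-- Directed reachability in the edge set `G`. -/
def Reach {V : Type*} (G : Finset (V × V)) (s t : V) : Prop :=
  Relation.ReflTransGen (fun a b => (a, b) ∈ G) s t

def inEdges {V : Type*} [DecidableEq V] (G : Finset (V × V)) (v : V) : Finset (V × V) :=
  G.filter fun e => e.2 = v

def outDeg {V : Type*} [DecidableEq V] (G : Finset (V × V)) (v : V) : ℕ :=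
  (G.filter fun e => e.1 = v).card

/-- `H` is a `(lam, k)` fault-tolerant bounded-flow-preserver of `G` w.r.t. source `s`:
for every set `F` of at most `k` failed edges and every vertex `t`, the `s`-`t` max-flow
of `H \ F` equals that of `G \ F` whenever the latter is at most `lam`, and is at least
`lam` otherwise. -/
def IsFTBFP {V : Type*} [DecidableEq V] (G H : Finset (V × V)) (s : V) (lam k : ℕ) : Prop :=
  H ⊆ G ∧ ∀ F : Finset (V × V), F.card ≤ k → ∀ t : V,
    (maxFlow (G \ F) s t ≤ lam → maxFlow (H \ F) s t = maxFlow (G \ F) s t) ∧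
    (lam < maxFlow (G \ F) s t → lam ≤ maxFlow (H \ F) s t)

/-- `H` is a `j`-fault-tolerant reachability subgraph of `G` w.r.t. source `s`. -/
def IsFTRS {V : Type*} [DecidableEq V] (G H : Finset (V × V)) (s : V) (j : ℕ) : Prop :=
  H ⊆ G ∧ ∀ F : Finset (V × V), F.card ≤ j → ∀ t : V,
    (Reach (H \ F) s t ↔ Reach (G \ F) s t)

def IsCut {V : Type*} (A : Finset V) (s t : V) : Prop := s ∈ A ∧ t ∉ A

/-- Number of edges of `G` from `A` to its complement. -/
def cutVal {V : Type*} [DecidableEq V] (G : Finset (V × V)) (A : Finset V) : ℕ :=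
  (G.filter fun e => e.1 ∈ A ∧ e.2 ∉ A).card

def IsMinCut {V : Type*} [DecidableEq V] (G : Finset (V × V)) (s t : V) (A : Finset V) : Prop :=
  IsCut A s t ∧ ∀ B : Finset V, IsCut B s t → cutVal G A ≤ cutVal G B

def IsCutS {V : Type*} (S : Finset V) (t : V) (A : Finset V) : Prop := S ⊆ A ∧ t ∉ A

def IsMinCutS {V : Type*} [DecidableEq V] (G : Finset (V × V)) (S : Finset V) (t : V)
    (A : Finset V) : Prop :=
  IsCutS S t A ∧ ∀ B : Finset V, IsCutS S t B → cutVal G A ≤ cutVal G B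

/-- Farthest min-cut: the min-cut whose source side contains the source side of
every min-cut. -/
def IsFMC {V : Type*} [DecidableEq V] (G : Finset (V × V)) (S : Finset V) (t : V)
    (A : Finset V) : Prop :=
  IsMinCutS G S t A ∧ ∀ B : Finset V, IsMinCutS G S t B → B ⊆ A

/-- Vertices outside `A` with an in-edge from `A`. -/
def outSet {V : Type*} [DecidableEq V] (G : Finset (V × V)) (A : Finset V) : Finset V :=
  (G.filter fun e => e.1 ∈ A ∧ e.2 ∉ A).image Prod.snd

open scoped Classical

/-- Nodes of a complete binary tree of height `k`, heap-indexed: the root is `0`,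
the children of `a` are `2a+1` and `2a+2`, the leaves are the indices `≥ 2^k - 1`. -/
abbrev TreeNode (k : ℕ) := Fin (2 ^ (k + 1) - 1)

/-- Vertices of the lower-bound graph: the source `s`, the nodes of `lam` disjoint
complete binary trees of height `k`, and a set `Y` of `nY` extra vertices. -/
abbrev LBV (lam k nY : ℕ) := Unit ⊕ (Fin lam × TreeNode k) ⊕ Fin nY

/-- Edges of the lower-bound graph: `s` to every root, the tree edges (directed
towards the leaves), and an edge from every leaf to every vertex of `Y`. -/
def lbEdge (lam k nY : ℕ) : LBV lam k nY × LBV lam k nY → Prop := fun e =>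
  match e with
  | (Sum.inl _, Sum.inr (Sum.inl (_, a))) => (a : ℕ) = 0
  | (Sum.inr (Sum.inl (i, a)), Sum.inr (Sum.inl (i', b))) =>
      i = i' ∧ ((b : ℕ) = 2 * (a : ℕ) + 1 ∨ (b : ℕ) = 2 * (a : ℕ) + 2)
  | (Sum.inr (Sum.inl (_, a)), Sum.inr (Sum.inr _)) => 2 ^ k - 1 ≤ (a : ℕ)
  | _ => False

noncomputable def lbGraph (lam k nY : ℕ) : Finset (LBV lam k nY × LBV lam k nY) :=
  Finset.univ.filter (lbEdge lam k nY)

namespace Stmt7Aux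

/-- canonical descending path: edges (g t, g (t-1)), ..., (g 1, g 0), (g 0, y). -/
def cp {V : Type*} (y : V) (g : ℕ → V) : ℕ → List (V × V)
  | 0 => [(g 0, y)]
  | (t+1) => (g (t+1), g t) :: cp y g t

lemma cp_ne_nil {V : Type*} (y : V) (g : ℕ → V) (t : ℕ) : cp y g t ≠ [] := by
  cases t <;> simp [cp]

lemma cp_head {V : Type*} (y : V) (g : ℕ → V) (t : ℕ) :
    (cp y g t).head?.map Prod.fst = some (g t) := by
  cases t <;> simp [cp]

lemma cp_last {V : Type*} (y : V) (g : ℕ → V) (t : ℕ) :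
    (cp y g t).getLast? = some (g 0, y) := by
  induction t with
  | zero => simp [cp]
  | succ t ih => rw [cp, List.getLast?_cons, ih]; rfl

lemma cp_chain {V : Type*} (y : V) (g : ℕ → V) (t : ℕ) :
    List.Chain' (fun e f => e.2 = f.1) (cp y g t) := by
  induction t with
  | zero => simp only [cp]; exact List.isChain_singleton _
  | succ t ih =>
      rw [cp]
      refine List.isChain_cons.2 ⟨?_, ih⟩
      intro z hz
      have := cp_head y g t
      rw [hz] at this
      simpa using this.symm

lemma cp_mem_last {V : Type*} (y : V) (g : ℕ → V) (t : ℕ) : (g 0, y) ∈ cp y g t := by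
  induction t with
  | zero => simp [cp]
  | succ t ih => simp [cp, ih]

lemma cp_mem {V : Type*} {y : V} {g : ℕ → V} {t : ℕ} {e : V × V} (he : e ∈ cp y g t) :
    e = (g 0, y) ∨ ∃ t' < t, e = (g (t'+1), g t') := by
  induction t with
  | zero => simp [cp] at he; exact Or.inl (by rw [he])
  | succ t ih =>
      rw [cp] at he
      rcases List.mem_cons.1 he with h | h
      · exact Or.inr ⟨t, by omega, h⟩
      · rcases ih h with h | ⟨t', ht', h⟩
        · exact Or.inl h
        · exact Or.inr ⟨t', by omega, h⟩

lemma mem_chain'_head_or {V : Type*} {R : V × V → V × V → Prop} :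
    ∀ {p : List (V × V)}, List.Chain' R p → ∀ {e}, e ∈ p →
      p.head? = some e ∨ ∃ f ∈ p, R f e
  | [], _, e, he => by simp at he
  | [a], _, e, he => by simp at he; subst he; simp
  | a :: b :: l, hc, e, he => by
      rcases List.mem_cons.1 he with rfl | he'
      · simp
      · have hc' : List.Chain' R (b :: l) := hc.tail
        have hab : R a b := (List.isChain_cons_cons.1 hc).1
        rcases mem_chain'_head_or hc' he' with h | ⟨f, hf, hfe⟩
        · simp at h; subst h; exact Or.inr ⟨a, by simp, hab⟩
        · exact Or.inr ⟨f, by simp [hf], hfe⟩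

/-- iterated parent -/
def c (n : ℕ) (j : ℕ) : ℕ := (fun m : ℕ => (m - 1) / 2)^[j] n

lemma c_zero (n : ℕ) : c n 0 = n := rfl

lemma c_succ (n j : ℕ) : c n (j+1) = (c n j - 1) / 2 := by
  unfold c; rw [Function.iterate_succ_apply']

lemma c_add (n a b : ℕ) : c n (a + b) = c (c n b) a := Function.iterate_add_apply _ a b n

lemma c_le_self (n : ℕ) : ∀ d, c n d ≤ n := by
  intro d
  induction d with
  | zero => exact le_rfl
  | succ d ih => rw [c_succ]; omega

lemma c_bounds {k n : ℕ} (h1 : 2^k - 1 ≤ n) (h2 : n < 2^(k+1) - 1) :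
    ∀ j ≤ k, 2^(k-j) - 1 ≤ c n j ∧ c n j ≤ 2^(k-j+1) - 2 := by
  intro j hj
  induction j with
  | zero =>
      simp only [Nat.sub_zero, c_zero]
      exact ⟨h1, by omega⟩
  | succ j ih =>
      have hjk : j ≤ k := by omega
      obtain ⟨l1, l2⟩ := ih hjk
      have hA : 0 < 2^(k-(j+1)) := Nat.pow_pos (by norm_num)
      have e1 : 2^(k-j) = 2 * 2^(k-(j+1)) := by
        rw [← pow_succ']; congr 1; omega
      have e2 : 2^(k-j+1) = 2 * 2^(k-j) := by rw [← pow_succ']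
      have e3 : 2^(k-(j+1)+1) = 2 * 2^(k-(j+1)) := by rw [← pow_succ']
      rw [c_succ]
      omega

section Main

variable {lam k nY : ℕ}

lemma B_pos (k : ℕ) : 0 < 2^(k+1) - 1 := by
  have : 2^(k+1) = 2 * 2^k := by rw [← pow_succ']
  have : 0 < 2^k := Nat.pow_pos (by norm_num)
  omega

/-- tree node with given value (mod the size, to make it total) -/
def nd (k m : ℕ) : TreeNode k := ⟨m % (2^(k+1)-1), Nat.mod_lt _ (B_pos k)⟩

lemma nd_val {k m : ℕ} (h : m < 2^(k+1)-1) : (nd k m : ℕ) = m := Nat.mod_eq_of_lt h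

variable {x : TreeNode k} (hx : 2^k - 1 ≤ (x : ℕ))

lemma pow_succ_eq (k : ℕ) : 2^(k+1) = 2 * 2^k := by rw [← pow_succ']

omit hx in
lemma c_lt_B : ∀ j, c (x:ℕ) j < 2^(k+1) - 1 := by
  intro j
  have h := c_le_self (x:ℕ) j
  have := x.isLt
  omega

include hx in
lemma c_k : c (x:ℕ) k = 0 := by
  have := (c_bounds hx x.isLt k le_rfl).2
  simp at this
  omega

include hx in
lemma c_high : ∀ j, k ≤ j → c (x:ℕ) j = 0 := by
  intro j hj
  have h0 : c (x:ℕ) j = c (c (x:ℕ) k) (j - k) := by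
    rw [← c_add]; congr 1; omega
  rw [h0, c_k hx]
  have := c_le_self 0 (j - k)
  omega

include hx in
lemma anc_le {a : ℕ} (h : ∃ j, c (x:ℕ) j = a) : ∃ j ≤ k, c (x:ℕ) j = a := by
  obtain ⟨j, hj⟩ := h
  rcases le_or_gt j k with h' | h'
  · exact ⟨j, h', hj⟩
  · exact ⟨k, le_rfl, by rw [c_k hx, ← hj, c_high hx j (by omega)]⟩

include hx in
lemma c_pos {j : ℕ} (hj : j < k) : 1 ≤ c (x:ℕ) j := by
  have h1 := (c_bounds hx x.isLt j (by omega)).1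
  have h2 : 2 ≤ 2^(k-j) := by
    calc 2 = 2^1 := rfl
    _ ≤ 2^(k-j) := Nat.pow_le_pow_right (by norm_num) (by omega)
  omega

include hx in
lemma child_forced {j b : ℕ} (hj : j + 1 ≤ k)
    (hb : b = 2 * c (x:ℕ) (j+1) + 1 ∨ b = 2 * c (x:ℕ) (j+1) + 2)
    (hanc : ∃ j', c (x:ℕ) j' = b) : b = c (x:ℕ) j := by
  set n := (x:ℕ) with hn
  obtain ⟨j', hj'⟩ := hanc
  have hparb : c b 1 = c n (j+1) := by
    show (b - 1) / 2 = c n (j+1)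
    omega
  rcases lt_trichotomy j' j with h | h | h
  · -- c n j = c b (j - j') ≤ par b = c n (j+1) < c n j
    exfalso
    have h1 : c n j = c (c n j') (j - j') := by rw [← c_add]; congr 1; omega
    have h2 : c (c n j') (j - j') = c (c b 1) (j - j' - 1) := by
      rw [hj', ← c_add]; congr 1; omega
    have h3 : c (c b 1) (j - j' - 1) ≤ c b 1 := c_le_self _ _
    have h4 : c n (j+1) = (c n j - 1) / 2 := c_succ n j
    have h5 : 1 ≤ c n j := c_pos hx (by omega)
    omega
  · rw [← h, hj']
  · -- b = c n j' ≤ c n (j+1) but b > c n (j+1)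
    exfalso
    have h1 : c n j' = c (c n (j+1)) (j' - (j+1)) := by rw [← c_add]; congr 1; omega
    have h2 : c (c n (j+1)) (j' - (j+1)) ≤ c n (j+1) := c_le_self _ _
    omega

end Main

end Stmt7Aux
namespace Stmt7Aux

lemma mem_lbGraph {lam k nY : ℕ} {e : LBV lam k nY × LBV lam k nY} :
    e ∈ lbGraph lam k nY ↔ lbEdge lam k nY e := by
  simp [lbGraph]

lemma forced (lam k nY : ℕ) (i : Fin lam) (x : TreeNode k)
    (hx : 2^k - 1 ≤ (x:ℕ)) (y : Fin nY)
    (F : Finset (LBV lam k nY × LBV lam k nY))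
    (hF : ∀ e : LBV lam k nY × LBV lam k nY, e ∈ F ↔
      ∃ a b : TreeNode k,
        e = (Sum.inr (Sum.inl (i, a)), Sum.inr (Sum.inl (i, b))) ∧
        ((b : ℕ) = 2 * (a : ℕ) + 1 ∨ (b : ℕ) = 2 * (a : ℕ) + 2) ∧
        (∃ j : ℕ, (fun m : ℕ => (m - 1) / 2)^[j] (x : ℕ) = (a : ℕ)) ∧
        ¬ (∃ j : ℕ, (fun m : ℕ => (m - 1) / 2)^[j] (x : ℕ) = (b : ℕ))) :
    ∀ p : List (LBV lam k nY × LBV lam k nY), ∀ j, j ≤ k →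
      (∀ e ∈ p, e ∈ lbGraph lam k nY \ F) →
      List.Chain' (fun e f => e.2 = f.1) p →
      p.head?.map Prod.fst = some (Sum.inr (Sum.inl (i, nd k (c (x:ℕ) j)))) →
      p.getLast?.map Prod.snd = some (Sum.inr (Sum.inr y)) →
      p = cp (Sum.inr (Sum.inr y)) (fun t => Sum.inr (Sum.inl (i, nd k (c (x:ℕ) t)))) j := by
  intro p
  induction p with
  | nil => intro j _ _ _ hh _; simp at hh
  | cons e rest ih =>
    intro j hj hmem hchain hh hl
    obtain ⟨e1, e2⟩ := e
    have hh' : e1 = Sum.inr (Sum.inl (i, nd k (c (x:ℕ) j))) := by simpa using hh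
    subst hh'
    have hein := hmem _ (List.mem_cons_self)
    rw [Finset.mem_sdiff] at hein
    obtain ⟨heG, heF⟩ := hein
    rw [mem_lbGraph] at heG
    cases j with
    | zero =>
      have hnv : ((nd k (c (x:ℕ) 0)) : ℕ) = (x:ℕ) := nd_val x.isLt
      rcases e2 with u | ⟨i2, b⟩ | y2
      · simp [lbEdge] at heG
      · exfalso
        simp only [lbEdge] at heG
        obtain ⟨-, hb⟩ := heG
        have hblt := b.isLt
        have hp := pow_succ_eq k
        omega
      · -- leaf edge to Y; rest must be empty
        cases rest with
        | nil =>
          simp only [List.getLast?_singleton, Option.map_some] at hl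
          have hy : y2 = y := by simpa using hl
          subst hy
          simp [cp]
        | cons f rest' =>
          exfalso
          obtain ⟨f1, f2⟩ := f
          have hf1 : f1 = Sum.inr (Sum.inr y2) :=
            ((List.isChain_cons_cons.1 hchain).1).symm
          subst hf1
          have hfin := hmem _ (List.mem_cons_of_mem _ (List.mem_cons_self))
          rw [Finset.mem_sdiff, mem_lbGraph] at hfin
          rcases f2 with u | ⟨i3, b3⟩ | y3 <;> simp [lbEdge] at hfin
    | succ j' =>
      have hnv : ((nd k (c (x:ℕ) (j'+1))) : ℕ) = c (x:ℕ) (j'+1) := nd_val (c_lt_B (j'+1))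
      have hcb := (c_bounds hx x.isLt (j'+1) hj).2
      have hple : 2^(k-(j'+1)+1) ≤ 2^k := Nat.pow_le_pow_right (by norm_num) (by omega)
      have hpk : 2 ≤ 2^k := by
        calc 2 = 2^1 := rfl
        _ ≤ 2^k := Nat.pow_le_pow_right (by norm_num) (by omega)
      rcases e2 with u | ⟨i2, b⟩ | y2
      · simp [lbEdge] at heG
      · -- tree edge
        simp only [lbEdge] at heG
        obtain ⟨hii, hb⟩ := heG
        subst hii
        rw [hnv] at hb
        have hbanc : ∃ j'', c (x:ℕ) j'' = (b:ℕ) := by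
          by_contra hcon
          exact heF ((hF _).2 ⟨nd k (c (x:ℕ) (j'+1)), b, rfl, by rw [hnv]; exact hb,
            ⟨j'+1, hnv.symm ▸ rfl⟩, hcon⟩)
        have hbc : (b:ℕ) = c (x:ℕ) j' := child_forced hx hj hb hbanc
        have hbnd : b = nd k (c (x:ℕ) j') := by
          apply Fin.ext
          rw [hbc, nd_val (c_lt_B j')]
        subst hbnd
        cases rest with
        | nil =>
          exfalso
          simp only [List.getLast?_singleton, Option.map_some] at hl
          simp at hl
        | cons f rest' =>
          have hch := List.isChain_cons_cons.1 hchain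
          have hrest := ih j' (by omega)
            (fun e' he' => hmem _ (List.mem_cons_of_mem _ he'))
            hch.2
            (by
              obtain ⟨f1, f2⟩ := f
              have : f1 = Sum.inr (Sum.inl (i, nd k (c (x:ℕ) j'))) := hch.1.symm
              subst this
              simp)
            (by rw [List.getLast?_cons_cons] at hl; exact hl)
          rw [cp, ← hrest]
      · exfalso
        simp only [lbEdge] at heG
        rw [hnv] at heG
        omega

end Stmt7Aux
namespace Stmt7Aux

section Two

variable {lam k nY : ℕ}

/-- the canonical path through tree `j0`, descending the ancestor chain of `x`. -/
def P (nY : ℕ) {lam k : ℕ} (x : TreeNode k) (y : Fin nY) (j0 : Fin lam) :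
    List (LBV lam k nY × LBV lam k nY) :=
  (Sum.inl (), Sum.inr (Sum.inl (j0, nd k (c (x:ℕ) k)))) ::
    cp (Sum.inr (Sum.inr y)) (fun t => Sum.inr (Sum.inl (j0, nd k (c (x:ℕ) t)))) k

lemma path_ok (i : Fin lam) (x : TreeNode k) (hx : 2^k - 1 ≤ (x:ℕ)) (y : Fin nY)
    (F : Finset (LBV lam k nY × LBV lam k nY))
    (hF : ∀ e : LBV lam k nY × LBV lam k nY, e ∈ F ↔
      ∃ a b : TreeNode k,
        e = (Sum.inr (Sum.inl (i, a)), Sum.inr (Sum.inl (i, b))) ∧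
        ((b : ℕ) = 2 * (a : ℕ) + 1 ∨ (b : ℕ) = 2 * (a : ℕ) + 2) ∧
        (∃ j : ℕ, (fun m : ℕ => (m - 1) / 2)^[j] (x : ℕ) = (a : ℕ)) ∧
        ¬ (∃ j : ℕ, (fun m : ℕ => (m - 1) / 2)^[j] (x : ℕ) = (b : ℕ))) (j0 : Fin lam) :
    IsPath (lbGraph lam k nY \ F) (Sum.inl ()) (Sum.inr (Sum.inr y)) (P nY x y j0) := by
  refine ⟨by simp [P], ?_, ?_, ?_, ?_⟩
  · -- edges
    intro e he
    rw [Finset.mem_sdiff, mem_lbGraph]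
    rcases List.mem_cons.1 he with rfl | he'
    · constructor
      · show lbEdge lam k nY _
        simp only [lbEdge]
        rw [nd_val (c_lt_B k), c_k hx]
      · intro hmemF
        rw [hF] at hmemF
        obtain ⟨a, b, heq, -⟩ := hmemF
        simp at heq
    · rcases cp_mem he' with rfl | ⟨t', ht', rfl⟩
      · constructor
        · show lbEdge lam k nY _
          simp only [lbEdge]
          rw [nd_val (c_lt_B 0)]
          exact hx
        · intro hmemF
          rw [hF] at hmemF
          obtain ⟨a, b, heq, -⟩ := hmemF
          simp at heq
      · have h1 : 1 ≤ c (x:ℕ) t' := c_pos hx ht'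
        have hcs : c (x:ℕ) (t'+1) = (c (x:ℕ) t' - 1) / 2 := c_succ (x:ℕ) t'
        constructor
        · show lbEdge lam k nY _
          simp only [lbEdge]
          rw [nd_val (c_lt_B (t'+1)), nd_val (c_lt_B t')]
          exact ⟨trivial, by omega⟩
        · intro hmemF
          rw [hF] at hmemF
          obtain ⟨a, b, heq, -, -, hnanc⟩ := hmemF
          simp only [Prod.mk.injEq, Sum.inr.injEq, Sum.inl.injEq, Prod.mk.injEq] at heq
          refine hnanc ⟨t', ?_⟩
          rw [← heq.2.2]
          exact (nd_val (c_lt_B t')).symm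
  · -- chain
    refine List.isChain_cons.2 ⟨?_, cp_chain _ _ _⟩
    intro z hz
    have := cp_head (Sum.inr (Sum.inr y) : LBV lam k nY)
      (fun t => Sum.inr (Sum.inl (j0, nd k (c (x:ℕ) t)))) k
    rw [hz] at this
    simpa using this.symm
  · simp [P]
  · rw [P, List.getLast?_cons, cp_last]
    rfl

lemma unique_path (i : Fin lam) (x : TreeNode k) (hx : 2^k - 1 ≤ (x:ℕ)) (y : Fin nY)
    (root : TreeNode k) (hroot : (root : ℕ) = 0)
    (F : Finset (LBV lam k nY × LBV lam k nY))
    (hF : ∀ e : LBV lam k nY × LBV lam k nY, e ∈ F ↔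
      ∃ a b : TreeNode k,
        e = (Sum.inr (Sum.inl (i, a)), Sum.inr (Sum.inl (i, b))) ∧
        ((b : ℕ) = 2 * (a : ℕ) + 1 ∨ (b : ℕ) = 2 * (a : ℕ) + 2) ∧
        (∃ j : ℕ, (fun m : ℕ => (m - 1) / 2)^[j] (x : ℕ) = (a : ℕ)) ∧
        ¬ (∃ j : ℕ, (fun m : ℕ => (m - 1) / 2)^[j] (x : ℕ) = (b : ℕ)))
    (p : List (LBV lam k nY × LBV lam k nY))
    (hp : IsPath (lbGraph lam k nY \ F) (Sum.inl ()) (Sum.inr (Sum.inr y)) p)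
    (hmem : (Sum.inl (), Sum.inr (Sum.inl (i, root))) ∈ p) :
    p = P nY x y i := by
  obtain ⟨hne, hpm, hchain, hh, hl⟩ := hp
  have hroot' : root = nd k (c (x:ℕ) k) := by
    apply Fin.ext
    rw [hroot, nd_val (c_lt_B k), c_k hx]
  -- the edge (s, r_i) must be the head
  have hhead : p.head? = some (Sum.inl (), Sum.inr (Sum.inl (i, root))) := by
    rcases mem_chain'_head_or hchain hmem with h | ⟨f, hf, hfe⟩
    · exact h
    · exfalso
      have := hpm f hf
      rw [Finset.mem_sdiff, mem_lbGraph] at this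
      obtain ⟨f1, f2⟩ := f
      have hf1 : f2 = Sum.inl () := hfe
      subst hf1
      rcases f1 with u | ⟨i3, b3⟩ | y3 <;> simp [lbEdge] at this
  -- p = head :: rest
  cases p with
  | nil => simp at hne
  | cons e rest =>
    simp only [List.head?_cons, Option.some.injEq] at hhead
    subst hhead
    cases rest with
    | nil =>
      exfalso
      simp at hl
    | cons f rest' =>
      have hch := List.isChain_cons_cons.1 hchain
      have hrest := forced lam k nY i x hx y F hF (f :: rest') k le_rfl
        (fun e' he' => hpm _ (List.mem_cons_of_mem _ he'))
        hch.2
        (by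
          obtain ⟨f1, f2⟩ := f
          have : f1 = Sum.inr (Sum.inl (i, root)) := hch.1.symm
          subst this
          rw [hroot']
          simp)
        (by rw [List.getLast?_cons_cons] at hl; exact hl)
      rw [P, ← hrest, hroot']

/-- extract the tree index of an edge -/
def tIdx : LBV lam k nY × LBV lam k nY → Option (Fin lam)
  | (_, Sum.inr (Sum.inl (j, _))) => some j
  | (Sum.inr (Sum.inl (j, _)), _) => some j
  | _ => none

lemma tIdx_P {x : TreeNode k} {y : Fin nY} {j0 : Fin lam}
    {e : LBV lam k nY × LBV lam k nY} (he : e ∈ P nY x y j0) : tIdx e = some j0 := by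
  rcases List.mem_cons.1 he with rfl | he'
  · rfl
  · rcases cp_mem he' with rfl | ⟨t', _, rfl⟩
    · rfl
    · rfl

lemma first_edge {G' : Finset (LBV lam k nY × LBV lam k nY)}
    (hG' : G' ⊆ lbGraph lam k nY) {t : LBV lam k nY}
    {p : List (LBV lam k nY × LBV lam k nY)}
    (hp : IsPath G' (Sum.inl ()) t p) :
    ∃ j : Fin lam, p.head? = some (Sum.inl (), Sum.inr (Sum.inl (j, nd k 0))) := by
  obtain ⟨hne, hpm, -, hh, -⟩ := hp
  cases p with
  | nil => simp at hne
  | cons e rest =>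
    obtain ⟨e1, e2⟩ := e
    have he1 : e1 = Sum.inl () := by simpa using hh
    subst he1
    have heG := hG' (hpm _ (List.mem_cons_self))
    rw [mem_lbGraph] at heG
    rcases e2 with u | ⟨j, a⟩ | y2
    · simp [lbEdge] at heG
    · refine ⟨j, ?_⟩
      have ha : a = nd k 0 := by
        apply Fin.ext
        have : (a:ℕ) = 0 := heG
        rw [this, nd_val (B_pos k)]
      rw [ha]
      rfl
    · simp [lbEdge] at heG

lemma edp_le {G' : Finset (LBV lam k nY × LBV lam k nY)}
    (hG' : G' ⊆ lbGraph lam k nY) {t : LBV lam k nY} {r : ℕ}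
    (h : EDP G' (Sum.inl ()) t r) : r ≤ lam := by
  obtain ⟨ps, hps, hdis⟩ := h
  have hfe : ∀ u : Fin r, ∃ j : Fin lam,
      (ps u).head? = some (Sum.inl (), Sum.inr (Sum.inl (j, nd k 0))) :=
    fun u => first_edge hG' (hps u)
  have hinj : Function.Injective (fun u => (hfe u).choose) := by
    intro u1 u2 heq
    by_contra hne
    have h1 := (hfe u1).choose_spec
    have h2 := (hfe u2).choose_spec
    simp only at heq
    rw [heq] at h1
    have hmem1 : (Sum.inl (), Sum.inr (Sum.inl ((hfe u2).choose, nd k 0))) ∈ ps u1 :=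
      List.mem_of_mem_head? h1
    have hmem2 : (Sum.inl (), Sum.inr (Sum.inl ((hfe u2).choose, nd k 0))) ∈ ps u2 :=
      List.mem_of_mem_head? h2
    exact hdis u1 u2 hne _ hmem1 hmem2
  simpa using Fintype.card_le_of_injective _ hinj

lemma edp_zero {V : Type*} (G : Finset (V × V)) (s t : V) : EDP G s t 0 :=
  ⟨Fin.elim0, fun u => u.elim0, fun u => u.elim0⟩

end Two

end Stmt7Aux
namespace Stmt7Aux

lemma F_card (lam k nY : ℕ) (i : Fin lam) (x : TreeNode k) (hx : 2^k - 1 ≤ (x:ℕ))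
    (F : Finset (LBV lam k nY × LBV lam k nY))
    (hF : ∀ e : LBV lam k nY × LBV lam k nY, e ∈ F ↔
      ∃ a b : TreeNode k,
        e = (Sum.inr (Sum.inl (i, a)), Sum.inr (Sum.inl (i, b))) ∧
        ((b : ℕ) = 2 * (a : ℕ) + 1 ∨ (b : ℕ) = 2 * (a : ℕ) + 2) ∧
        (∃ j : ℕ, (fun m : ℕ => (m - 1) / 2)^[j] (x : ℕ) = (a : ℕ)) ∧
        ¬ (∃ j : ℕ, (fun m : ℕ => (m - 1) / 2)^[j] (x : ℕ) = (b : ℕ))) :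
    F.card ≤ k := by
  have hsub : F ⊆ (Finset.range k).image (fun t =>
      ((Sum.inr (Sum.inl (i, nd k (c (x:ℕ) (t+1)))),
        Sum.inr (Sum.inl (i, nd k (4 * c (x:ℕ) (t+1) + 3 - c (x:ℕ) t)))) :
        LBV lam k nY × LBV lam k nY)) := by
    intro e he
    rw [hF] at he
    obtain ⟨a, b, rfl, hchild, hanca, hnanc⟩ := he
    obtain ⟨j, hjk, hja⟩ := anc_le hx hanca
    have hblt := b.isLt
    have hp := pow_succ_eq k
    have halt : (a:ℕ) ≤ 2^k - 2 := by omega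
    have hj1 : 1 ≤ j := by
      rcases Nat.eq_zero_or_pos j with rfl | h
      · rw [c_zero] at hja; omega
      · exact h
    obtain ⟨m, rfl⟩ : ∃ m, j = m + 1 := ⟨j - 1, by omega⟩
    have hm : m < k := by omega
    have hcm : 1 ≤ c (x:ℕ) m := c_pos hx hm
    have hcs : c (x:ℕ) (m+1) = (c (x:ℕ) m - 1)/2 := c_succ _ m
    have hbm : (b:ℕ) ≠ c (x:ℕ) m := fun h => hnanc ⟨m, h.symm⟩
    have hbv : (b:ℕ) = 4 * (a:ℕ) + 3 - c (x:ℕ) m := by omega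
    rw [Finset.mem_image]
    refine ⟨m, Finset.mem_range.2 hm, ?_⟩
    have h1 : nd k (c (x:ℕ) (m+1)) = a := Fin.ext (by rw [nd_val (c_lt_B (m+1)), hja])
    have h2 : nd k (4 * c (x:ℕ) (m+1) + 3 - c (x:ℕ) m) = b := by
      apply Fin.ext
      have hv : 4 * c (x:ℕ) (m+1) + 3 - c (x:ℕ) m = (b:ℕ) := by rw [hja]; omega
      rw [hv, nd_val hblt]
    rw [h1, h2]
  calc F.card ≤ _ := Finset.card_le_card hsub
    _ ≤ (Finset.range k).card := Finset.card_image_le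
    _ = k := Finset.card_range k

end Stmt7Aux
/-- in the lower-bound graph, for a leaf `x` of tree `i` and `y ∈ Y`,
failing the set `F` of sibling edges along the root-to-`x` path leaves exactly one
`s`-to-`y` path through the root `r_i`, this path uses the edge `(x, y)`, the
`s`-`y` max-flow of `G ∖ F` is `lam`, and hence any subgraph of `G` missing `(x,y)`
is not a `(lam,k)`-FT-BFP of `G`. -/
theorem stmt_7 (lam k nY : ℕ) (i : Fin lam) (x : TreeNode k)
    (hx : 2 ^ k - 1 ≤ (x : ℕ)) (y : Fin nY)
    (root : TreeNode k) (hroot : (root : ℕ) = 0)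
    (F : Finset (LBV lam k nY × LBV lam k nY))
    (hF : ∀ e : LBV lam k nY × LBV lam k nY, e ∈ F ↔
      ∃ a b : TreeNode k,
        e = (Sum.inr (Sum.inl (i, a)), Sum.inr (Sum.inl (i, b))) ∧
        ((b : ℕ) = 2 * (a : ℕ) + 1 ∨ (b : ℕ) = 2 * (a : ℕ) + 2) ∧
        (∃ j : ℕ, (fun m : ℕ => (m - 1) / 2)^[j] (x : ℕ) = (a : ℕ)) ∧
        ¬ (∃ j : ℕ, (fun m : ℕ => (m - 1) / 2)^[j] (x : ℕ) = (b : ℕ))) :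
    (∃! p : List (LBV lam k nY × LBV lam k nY),
        IsPath (lbGraph lam k nY \ F) (Sum.inl ()) (Sum.inr (Sum.inr y)) p ∧
        (Sum.inl (), Sum.inr (Sum.inl (i, root))) ∈ p) ∧
    (∀ p : List (LBV lam k nY × LBV lam k nY),
        IsPath (lbGraph lam k nY \ F) (Sum.inl ()) (Sum.inr (Sum.inr y)) p →
        (Sum.inl (), Sum.inr (Sum.inl (i, root))) ∈ p →
        (Sum.inr (Sum.inl (i, x)), Sum.inr (Sum.inr y)) ∈ p) ∧
    maxFlow (lbGraph lam k nY \ F) (Sum.inl ()) (Sum.inr (Sum.inr y)) = lam ∧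
    (∀ H : Finset (LBV lam k nY × LBV lam k nY), H ⊆ lbGraph lam k nY →
        (Sum.inr (Sum.inl (i, x)), Sum.inr (Sum.inr y)) ∉ H →
        ¬ IsFTBFP (lbGraph lam k nY) H (Sum.inl ()) lam k) := by
  have hroot' : root = Stmt7Aux.nd k (Stmt7Aux.c (x:ℕ) k) := by
    apply Fin.ext
    rw [hroot, Stmt7Aux.nd_val (Stmt7Aux.c_lt_B k), Stmt7Aux.c_k hx]
  have hxnd : x = Stmt7Aux.nd k (Stmt7Aux.c (x:ℕ) 0) := by
    apply Fin.ext
    rw [Stmt7Aux.nd_val (Stmt7Aux.c_lt_B 0)]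
    rfl
  have part2 : ∀ p, IsPath (lbGraph lam k nY \ F) (Sum.inl ()) (Sum.inr (Sum.inr y)) p →
      (Sum.inl (), Sum.inr (Sum.inl (i, root))) ∈ p →
      (Sum.inr (Sum.inl (i, x)), Sum.inr (Sum.inr y)) ∈ p := by
    intro p hp hm
    rw [Stmt7Aux.unique_path i x hx y root hroot F hF p hp hm, Stmt7Aux.P]
    refine List.mem_cons_of_mem _ ?_
    have hmm := Stmt7Aux.cp_mem_last (Sum.inr (Sum.inr y) : LBV lam k nY)
      (fun t => Sum.inr (Sum.inl (i, Stmt7Aux.nd k (Stmt7Aux.c (x:ℕ) t)))) k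
    rwa [← hxnd] at hmm
  have part3 : maxFlow (lbGraph lam k nY \ F) (Sum.inl ()) (Sum.inr (Sum.inr y)) = lam := by
    have hgr : IsGreatest {r | EDP (lbGraph lam k nY \ F) (Sum.inl ())
        (Sum.inr (Sum.inr y)) r} lam := by
      constructor
      · refine ⟨fun j => Stmt7Aux.P nY x y j, fun j => Stmt7Aux.path_ok i x hx y F hF j, ?_⟩
        intro j1 j2 hne e he1 he2
        apply hne
        have h1 := Stmt7Aux.tIdx_P he1
        have h2 := Stmt7Aux.tIdx_P he2
        have := h1.symm.trans h2
        exact Option.some_injective _ this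
      · intro r hr
        exact Stmt7Aux.edp_le Finset.sdiff_subset hr
    exact hgr.csSup_eq
  refine ⟨?_, part2, part3, ?_⟩
  · refine ⟨Stmt7Aux.P nY x y i, ⟨Stmt7Aux.path_ok i x hx y F hF i, ?_⟩, ?_⟩
    · rw [Stmt7Aux.P, hroot']
      exact List.mem_cons_self
    · rintro q ⟨hq, hqm⟩
      exact Stmt7Aux.unique_path i x hx y root hroot F hF q hq hqm
  · intro H hHsub hxy hBFP
    obtain ⟨hHG, hspec⟩ := hBFP
    have hcard : F.card ≤ k := Stmt7Aux.F_card lam k nY i x hx F hF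
    have heq := (hspec F hcard (Sum.inr (Sum.inr y))).1 (le_of_eq part3)
    rw [part3] at heq
    have hHsub' : ∀ e ∈ H \ F, e ∈ lbGraph lam k nY :=
      fun e he => hHsub (Finset.mem_sdiff.1 he).1
    have hbdd : BddAbove {r | EDP (H \ F) (Sum.inl ()) (Sum.inr (Sum.inr y)) r} :=
      ⟨lam, fun r hr => Stmt7Aux.edp_le hHsub' hr⟩
    have hmem : lam ∈ {r | EDP (H \ F) (Sum.inl ()) (Sum.inr (Sum.inr y)) r} := by
      have h0 : (0:ℕ) ∈ {r | EDP (H \ F) (Sum.inl ()) (Sum.inr (Sum.inr y)) r} :=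
        Stmt7Aux.edp_zero _ _ _
      have hs := Nat.sSup_mem (s := {r | EDP (H \ F) (Sum.inl ()) (Sum.inr (Sum.inr y)) r})
        ⟨0, h0⟩ hbdd
      have heq' : sSup {r | EDP (H \ F) (Sum.inl ()) (Sum.inr (Sum.inr y)) r} = lam := heq
      rwa [heq'] at hs
    obtain ⟨ps, hps, hdis⟩ := hmem
    have hfe : ∀ u : Fin lam, ∃ j : Fin lam,
        (ps u).head? = some (Sum.inl (), Sum.inr (Sum.inl (j, Stmt7Aux.nd k 0))) :=
      fun u => Stmt7Aux.first_edge hHsub' (hps u)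
    have hinj : Function.Injective (fun u => (hfe u).choose) := by
      intro u1 u2 hequ
      by_contra hne
      have h1 := (hfe u1).choose_spec
      have h2 := (hfe u2).choose_spec
      simp only at hequ
      rw [hequ] at h1
      exact hdis u1 u2 hne _ (List.mem_of_mem_head? h1) (List.mem_of_mem_head? h2)
    obtain ⟨u, hu⟩ := Finite.injective_iff_surjective.1 hinj i
    have hrootnd : root = Stmt7Aux.nd k 0 := by
      apply Fin.ext
      rw [hroot, Stmt7Aux.nd_val (Stmt7Aux.B_pos k)]
    have hpath : IsPath (lbGraph lam k nY \ F) (Sum.inl ()) (Sum.inr (Sum.inr y)) (ps u) := by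
      obtain ⟨a1, a2, a3, a4, a5⟩ := hps u
      exact ⟨a1, fun e he =>
        Finset.sdiff_subset_sdiff hHsub le_rfl (a2 e he), a3, a4, a5⟩
    have hmemhead : (Sum.inl (), Sum.inr (Sum.inl (i, root))) ∈ ps u := by
      have hsp := (hfe u).choose_spec
      simp only at hu
      rw [hu] at hsp
      rw [hrootnd]
      exact List.mem_of_mem_head? hsp
    have hxyin := part2 _ hpath hmemhead
    have hin : (Sum.inr (Sum.inl (i, x)), Sum.inr (Sum.inr y)) ∈ H :=
      (Finset.mem_sdiff.1 ((hps u).2.1 _ hxyin)).1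
    exact hxy hin
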